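/- If G is a partial cube and H is an expansion of G with respect to isometric subgraphs G¹ and G² covering G with non-empty intersection, then H is a partial cube. -/

import Mathlib

open SimpleGraph

/-- The hypercube graph `Q_d` on `{0,1}^d`: two vertices are adjacent iff they
differ in exactly one coordinate. -/
def hypercubeGraph (d : ℕ) : SimpleGraph (Fin d → Bool) where
  Adj x y := hammingDist x y = 1
  symm := by
    constructor
    intro x y h
    rwa [hammingDist_comm]
  loopless := by
    constructor
    intro x h
    simp [hammingDist_self] at h

/-- A partial cube: a connected simple graph admitting an isometric embedding
into some hypercube. -/
def IsPartialCube {V : Type} (G : SimpleGraph V) : Prop :=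
  G.Connected ∧
    ∃ (d : ℕ) (φ : V → (Fin d → Bool)), Function.Injective φ ∧
      ∀ v w : V, (hypercubeGraph d).dist (φ v) (φ w) = G.dist v w

/-- A subgraph is isometric if distances within it coincide with distances in
the ambient graph. -/
def IsIsometricSubgraph {V : Type} {G : SimpleGraph V} (G' : G.Subgraph) : Prop :=
  ∀ u v : G'.verts, G'.coe.dist u v = G.dist u.val v.val

/-- The expansion graph of `G` with respect to two subgraphs `G₁, G₂`: take
disjoint copies of `G₁` and `G₂` and join the two copies of each vertex of
`G₁ ∩ G₂` by a matching edge. -/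
def expansionGraph {V : Type} {G : SimpleGraph V} (G₁ G₂ : G.Subgraph) :
    SimpleGraph (↥G₁.verts ⊕ ↥G₂.verts) where
  Adj a b :=
    match a, b with
    | Sum.inl u, Sum.inl v => G₁.Adj u v
    | Sum.inr u, Sum.inr v => G₂.Adj u v
    | Sum.inl u, Sum.inr v => (u : V) = (v : V)
    | Sum.inr u, Sum.inl v => (u : V) = (v : V)
  symm := by
    constructor
    rintro (u | u) (v | v) h
    · exact G₁.symm.symm _ _ h
    · exact h.symm
    · exact h.symm
    · exact G₂.symm.symm _ _ h
  loopless := by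
    constructor
    rintro (u | u) h
    · exact G.loopless.irrefl _ (G₁.adj_sub h)
    · exact G.loopless.irrefl _ (G₂.adj_sub h)

/-- `H` is the expansion of `G` with respect to the subgraphs `G₁` and `G₂`:
they are isometric, cover `G` (vertices and edges), have non-empty
intersection, and `H` is isomorphic to the resulting expansion graph. -/
structure IsExpansionWrt {V W : Type} (H : SimpleGraph W) (G : SimpleGraph V)
    (G₁ G₂ : G.Subgraph) : Prop where
  isometric₁ : IsIsometricSubgraph G₁
  isometric₂ : IsIsometricSubgraph G₂
  covers : G₁ ⊔ G₂ = ⊤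
  inter_nonempty : (G₁.verts ∩ G₂.verts).Nonempty
  iso : Nonempty (H ≃g expansionGraph G₁ G₂)

/-- `H` is an expansion of `G` (with respect to some admissible pair of
subgraphs). -/
def IsExpansionOf {V W : Type} (H : SimpleGraph W) (G : SimpleGraph V) : Prop :=
  ∃ G₁ G₂ : G.Subgraph, IsExpansionWrt H G G₁ G₂

lemma hammingDist_le_walk_length {d : ℕ} {x y : Fin d → Bool}
    (p : (hypercubeGraph d).Walk x y) : hammingDist x y ≤ p.length := by
  induction p with
  | nil => simp
  | @cons u v w h q ih =>
    have h1 : hammingDist u v = 1 := h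
    have h2 := hammingDist_triangle u v w
    rw [SimpleGraph.Walk.length_cons]
    omega

lemma hypercube_exists_walk {d : ℕ} :
    ∀ (n : ℕ) (x y : Fin d → Bool), hammingDist x y = n →
      ∃ p : (hypercubeGraph d).Walk x y, p.length = n := by
  intro n
  induction n with
  | zero =>
    intro x y h
    rw [hammingDist_eq_zero] at h
    subst h
    exact ⟨.nil, rfl⟩
  | succ n ih =>
    intro x y h
    have hne : x ≠ y := by
      intro hxy; subst hxy; simp [hammingDist_self] at h
    obtain ⟨i, hi⟩ : ∃ i, x i ≠ y i := Function.ne_iff.mp hne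
    set x' := Function.update x i (y i) with hx'
    have h1 : hammingDist x x' = 1 := by
      have : (Finset.univ.filter fun j => x j ≠ x' j) = {i} := by
        ext j
        by_cases hj : j = i <;>
          simp [hx', Function.update_apply, hj, hi]
      unfold hammingDist
      rw [this]; simp
    have h2 : hammingDist x' y = n := by
      have he : (Finset.univ.filter fun j => x' j ≠ y j) =
          (Finset.univ.filter fun j => x j ≠ y j).erase i := by
        ext j
        by_cases hj : j = i <;>
          simp [hx', Function.update_apply, hj]
      have hmem : i ∈ Finset.univ.filter fun j => x j ≠ y j := by simp [hi]
      unfold hammingDist at h ⊢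
      rw [he, Finset.card_erase_of_mem hmem, h]
      omega
    obtain ⟨p, hp⟩ := ih x' y h2
    have h1' : (hypercubeGraph d).Adj x x' := h1
    exact ⟨.cons h1' p, by simp [hp]⟩

lemma hypercube_dist {d : ℕ} (x y : Fin d → Bool) :
    (hypercubeGraph d).dist x y = hammingDist x y := by
  obtain ⟨p, hp⟩ := hypercube_exists_walk (hammingDist x y) x y rfl
  refine le_antisymm (hp ▸ SimpleGraph.dist_le p) ?_
  obtain ⟨q, hq⟩ := (Reachable.exists_walk_length_eq_dist ⟨p⟩)
  calc hammingDist x y ≤ q.length := hammingDist_le_walk_length q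
  _ = _ := hq

lemma hammingDist_snoc {d : ℕ} (x y : Fin d → Bool) (b c : Bool) :
    hammingDist (Fin.snoc x b : Fin (d+1) → Bool) (Fin.snoc y c : Fin (d+1) → Bool) =
      hammingDist x y + (if b = c then 0 else 1) := by
  unfold hammingDist
  rw [Finset.card_filter, Finset.card_filter, Fin.sum_univ_castSucc]
  simp only [Fin.snoc_castSucc, Fin.snoc_last]
  by_cases hbc : b = c <;> simp [hbc]

variable {V : Type} {G : SimpleGraph V} {G₁ G₂ : G.Subgraph}

/-- projection to `V` -/
def eproj (a : ↥G₁.verts ⊕ ↥G₂.verts) : V := Sum.elim Subtype.val Subtype.val a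

/-- which side -/
def eside (a : ↥G₁.verts ⊕ ↥G₂.verts) : Bool := Sum.elim (fun _ => false) (fun _ => true) a

def inlHom (G₁ G₂ : G.Subgraph) : G₁.coe →g expansionGraph G₁ G₂ :=
  ⟨Sum.inl, fun h => h⟩

def inrHom (G₁ G₂ : G.Subgraph) : G₂.coe →g expansionGraph G₁ G₂ :=
  ⟨Sum.inr, fun h => h⟩

lemma walk_inl (hconn : G.Connected) (hiso : IsIsometricSubgraph G₁) (u v : ↥G₁.verts) :
    ∃ p : (expansionGraph G₁ G₂).Walk (Sum.inl u) (Sum.inl v),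
      p.length = G.dist u.val v.val := by
  by_cases huv : u = v
  · subst huv
    exact ⟨.nil, by simp [SimpleGraph.dist_self]⟩
  · have hne : (u : V) ≠ (v : V) := fun h => huv (Subtype.ext h)
    have hd : G₁.coe.dist u v ≠ 0 := by
      rw [hiso]
      exact (hconn.pos_dist_of_ne hne).ne'
    obtain ⟨q, hq⟩ := SimpleGraph.exists_walk_of_dist_ne_zero hd
    refine ⟨q.map (inlHom G₁ G₂), ?_⟩
    exact (SimpleGraph.Walk.length_map _ _).trans (hq.trans (hiso u v))

lemma walk_inr (hconn : G.Connected) (hiso : IsIsometricSubgraph G₂) (u v : ↥G₂.verts) :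
    ∃ p : (expansionGraph G₁ G₂).Walk (Sum.inr u) (Sum.inr v),
      p.length = G.dist u.val v.val := by
  by_cases huv : u = v
  · subst huv
    exact ⟨.nil, by simp [SimpleGraph.dist_self]⟩
  · have hne : (u : V) ≠ (v : V) := fun h => huv (Subtype.ext h)
    have hd : G₂.coe.dist u v ≠ 0 := by
      rw [hiso]
      exact (hconn.pos_dist_of_ne hne).ne'
    obtain ⟨q, hq⟩ := SimpleGraph.exists_walk_of_dist_ne_zero hd
    refine ⟨q.map (inrHom G₁ G₂), ?_⟩
    exact (SimpleGraph.Walk.length_map _ _).trans (hq.trans (hiso u v))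

lemma exists_crossing (hconn : G.Connected) (hcov : G₁ ⊔ G₂ = ⊤) :
    ∀ (n : ℕ) (u v : V), G.dist u v = n → u ∈ G₁.verts → v ∈ G₂.verts →
      ∃ w, w ∈ G₁.verts ∧ w ∈ G₂.verts ∧ G.dist u w + G.dist w v = G.dist u v := by
  intro n
  induction n using Nat.strong_induction_on with
  | _ n ih =>
  intro u v hd hu hv
  by_cases hu2 : u ∈ G₂.verts
  · exact ⟨u, hu, hu2, by simp⟩
  · have hne : u ≠ v := fun h => hu2 (h ▸ hv)
    have hpos : G.dist u v ≠ 0 := (hconn.pos_dist_of_ne hne).ne'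
    obtain ⟨p, hp⟩ := (hconn u v).exists_walk_length_eq_dist
    cases p with
    | nil => exact absurd rfl hne
    | @cons _ x _ h q =>
      have hsup : (G₁ ⊔ G₂).Adj u x := by rw [hcov]; exact h
      have hx1 : G₁.Adj u x := by
        rcases SimpleGraph.Subgraph.sup_adj.mp hsup with h1 | h2
        · exact h1
        · exact absurd (G₂.edge_vert h2) hu2
      have hx : x ∈ G₁.verts := G₁.edge_vert hx1.symm
      have hux : G.dist u x ≤ 1 := by
        have := SimpleGraph.dist_le (SimpleGraph.Walk.cons h .nil)
        simpa using this
      have hql : q.length = n - 1 := by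
        rw [SimpleGraph.Walk.length_cons] at hp; omega
      have hxv1 : G.dist x v ≤ n - 1 := hql ▸ SimpleGraph.dist_le q
      have htri : G.dist u v ≤ G.dist u x + G.dist x v := hconn.dist_triangle
      have hxv : G.dist x v = n - 1 := by omega
      have hn : 1 ≤ n := by
        rw [SimpleGraph.Walk.length_cons] at hp; omega
      obtain ⟨w, hw1, hw2, hw⟩ := ih (n - 1) (by omega) x v hxv hx hv
      refine ⟨w, hw1, hw2, ?_⟩
      have h1 : G.dist u w ≤ G.dist u x + G.dist x w := hconn.dist_triangle
      have h2 : G.dist u v ≤ G.dist u w + G.dist w v := hconn.dist_triangle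
      omega

lemma walk_mixed (hconn : G.Connected) (hcov : G₁ ⊔ G₂ = ⊤)
    (hiso1 : IsIsometricSubgraph G₁) (hiso2 : IsIsometricSubgraph G₂)
    (u : ↥G₁.verts) (v : ↥G₂.verts) :
    ∃ p : (expansionGraph G₁ G₂).Walk (Sum.inl u) (Sum.inr v),
      p.length = G.dist u.val v.val + 1 := by
  obtain ⟨w, hw1, hw2, hw⟩ := exists_crossing hconn hcov _ u.val v.val rfl u.2 v.2
  obtain ⟨p₁, hp₁⟩ := walk_inl (G₂ := G₂) hconn hiso1 u ⟨w, hw1⟩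
  obtain ⟨p₂, hp₂⟩ := walk_inr (G₁ := G₁) hconn hiso2 ⟨w, hw2⟩ v
  have hm : (expansionGraph G₁ G₂).Adj (Sum.inl ⟨w, hw1⟩) (Sum.inr ⟨w, hw2⟩) := rfl
  refine ⟨p₁.append (.cons hm p₂), ?_⟩
  rw [SimpleGraph.Walk.length_append, SimpleGraph.Walk.length_cons, hp₁, hp₂]
  have hw' : G.dist u.val ((⟨w, hw1⟩ : ↥G₁.verts) : V) +
      G.dist ((⟨w, hw2⟩ : ↥G₂.verts) : V) v.val = G.dist u.val v.val := hw
  omega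

lemma dist_le_one_of_adj {u v : V} (h : G.Adj u v) : G.dist u v ≤ 1 := by
  have := SimpleGraph.dist_le (SimpleGraph.Walk.cons h .nil)
  simpa using this

lemma expansion_lower (hconn : G.Connected) {a b : ↥G₁.verts ⊕ ↥G₂.verts}
    (p : (expansionGraph G₁ G₂).Walk a b) :
    G.dist (eproj a) (eproj b) + (if eside a = eside b then 0 else 1) ≤ p.length := by
  induction p with
  | nil => simp
  | @cons a c b h q ih =>
    rw [SimpleGraph.Walk.length_cons]
    rcases a with u | u <;> rcases c with x | x <;> rcases b with b | b <;>
      simp only [eproj, eside, Sum.elim_inl, Sum.elim_inr, reduceIte, Nat.add_zero, Bool.false_eq_true, Bool.true_eq_false, ite_true, ite_false] at ih ⊢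
    · have hux := dist_le_one_of_adj (G₁.adj_sub (h : G₁.Adj u.val x.val))
      have htri := hconn.dist_triangle (u := u.val) (v := x.val) (w := b.val)
      omega
    · have hux := dist_le_one_of_adj (G₁.adj_sub (h : G₁.Adj u.val x.val))
      have htri := hconn.dist_triangle (u := u.val) (v := x.val) (w := b.val)
      omega
    · rw [show (u : V) = (x : V) from h]
      omega
    · rw [show (u : V) = (x : V) from h]
      omega
    · rw [show (u : V) = (x : V) from h]
      omega
    · rw [show (u : V) = (x : V) from h]
      omega
    · have hux := dist_le_one_of_adj (G₂.adj_sub (h : G₂.Adj u.val x.val))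
      have htri := hconn.dist_triangle (u := u.val) (v := x.val) (w := b.val)
      omega
    · have hux := dist_le_one_of_adj (G₂.adj_sub (h : G₂.Adj u.val x.val))
      have htri := hconn.dist_triangle (u := u.val) (v := x.val) (w := b.val)
      omega

lemma dist_inl_inl (hconn : G.Connected) (hiso1 : IsIsometricSubgraph G₁)
    (u v : ↥G₁.verts) :
    (expansionGraph G₁ G₂).dist (Sum.inl u) (Sum.inl v) = G.dist u.val v.val := by
  obtain ⟨p, hp⟩ := walk_inl (G₂ := G₂) hconn hiso1 u v
  refine le_antisymm (hp ▸ SimpleGraph.dist_le p) ?_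
  obtain ⟨q, hq⟩ := Reachable.exists_walk_length_eq_dist ⟨p⟩
  have := expansion_lower hconn q
  simp only [eproj, eside, Sum.elim_inl, reduceIte, Nat.add_zero] at this
  omega

lemma dist_inr_inr (hconn : G.Connected) (hiso2 : IsIsometricSubgraph G₂)
    (u v : ↥G₂.verts) :
    (expansionGraph G₁ G₂).dist (Sum.inr u) (Sum.inr v) = G.dist u.val v.val := by
  obtain ⟨p, hp⟩ := walk_inr (G₁ := G₁) hconn hiso2 u v
  refine le_antisymm (hp ▸ SimpleGraph.dist_le p) ?_
  obtain ⟨q, hq⟩ := Reachable.exists_walk_length_eq_dist ⟨p⟩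
  have := expansion_lower hconn q
  simp only [eproj, eside, Sum.elim_inr, reduceIte, Nat.add_zero] at this
  omega

lemma dist_inl_inr (hconn : G.Connected) (hcov : G₁ ⊔ G₂ = ⊤)
    (hiso1 : IsIsometricSubgraph G₁) (hiso2 : IsIsometricSubgraph G₂)
    (u : ↥G₁.verts) (v : ↥G₂.verts) :
    (expansionGraph G₁ G₂).dist (Sum.inl u) (Sum.inr v) = G.dist u.val v.val + 1 := by
  obtain ⟨p, hp⟩ := walk_mixed hconn hcov hiso1 hiso2 u v
  refine le_antisymm (hp ▸ SimpleGraph.dist_le p) ?_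
  obtain ⟨q, hq⟩ := Reachable.exists_walk_length_eq_dist ⟨p⟩
  have := expansion_lower hconn q
  simp only [eproj, eside, Sum.elim_inl, Sum.elim_inr, Bool.false_eq_true,
    ite_false] at this
  omega

lemma dist_inr_inl (hconn : G.Connected) (hcov : G₁ ⊔ G₂ = ⊤)
    (hiso1 : IsIsometricSubgraph G₁) (hiso2 : IsIsometricSubgraph G₂)
    (u : ↥G₂.verts) (v : ↥G₁.verts) :
    (expansionGraph G₁ G₂).dist (Sum.inr u) (Sum.inl v) = G.dist u.val v.val + 1 := by
  rw [SimpleGraph.dist_comm, dist_inl_inr hconn hcov hiso1 hiso2 v u,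
    SimpleGraph.dist_comm]

lemma expansion_connected (hconn : G.Connected) (hcov : G₁ ⊔ G₂ = ⊤)
    (hiso1 : IsIsometricSubgraph G₁) (hiso2 : IsIsometricSubgraph G₂)
    (hne : (G₁.verts ∩ G₂.verts).Nonempty) :
    (expansionGraph G₁ G₂).Connected := by
  obtain ⟨w0, hw1, hw2⟩ := hne
  have hnonempty : Nonempty (↥G₁.verts ⊕ ↥G₂.verts) := ⟨Sum.inl ⟨w0, hw1⟩⟩
  rw [SimpleGraph.connected_iff]
  refine ⟨fun a b => ?_, hnonempty⟩
  rcases a with u | u <;> rcases b with v | v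
  · obtain ⟨p, _⟩ := walk_inl (G₂ := G₂) hconn hiso1 u v; exact ⟨p⟩
  · obtain ⟨p, _⟩ := walk_mixed hconn hcov hiso1 hiso2 u v; exact ⟨p⟩
  · obtain ⟨p, _⟩ := walk_mixed hconn hcov hiso1 hiso2 v u; exact ⟨p.reverse⟩
  · obtain ⟨p, _⟩ := walk_inr (G₁ := G₁) hconn hiso2 u v; exact ⟨p⟩

lemma iso_dist_eq {V' W' : Type} {A : SimpleGraph V'} {B : SimpleGraph W'}
    (e : A ≃g B) (u v : V') : A.dist u v = B.dist (e u) (e v) := by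
  by_cases hr : A.Reachable u v
  · refine le_antisymm ?_ ?_
    · obtain ⟨q, hq⟩ := (hr.map e.toHom).exists_walk_length_eq_dist
      have hle := SimpleGraph.dist_le
        (((q.map e.symm.toHom).copy (by simp) (by simp)) : A.Walk u v)
      rwa [SimpleGraph.Walk.length_copy, SimpleGraph.Walk.length_map, hq] at hle
    · obtain ⟨q, hq⟩ := hr.exists_walk_length_eq_dist
      have hle := SimpleGraph.dist_le (q.map e.toHom)
      rwa [SimpleGraph.Walk.length_map, hq] at hle
  · have hr2 : ¬B.Reachable (e u) (e v) := fun h => hr (by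
      have := h.map e.symm.toHom
      simpa using this)
    rw [SimpleGraph.dist_eq_zero_of_not_reachable hr,
      SimpleGraph.dist_eq_zero_of_not_reachable hr2]

lemma iso_connected {V' W' : Type} {A : SimpleGraph V'} {B : SimpleGraph W'}
    (e : A ≃g B) (hB : B.Connected) : A.Connected := by
  have hnonempty : Nonempty V' := ⟨e.symm (Classical.choice hB.nonempty)⟩
  rw [SimpleGraph.connected_iff]
  refine ⟨fun u v => ?_, hnonempty⟩
  have h := (hB.preconnected (e u) (e v)).map e.symm.toHom
  simpa using h


/-- If `G` is a partial cube and `H` is an expansion of `G` with respect to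
isometric subgraphs `G₁` and `G₂` covering `G` with non-empty intersection,
then `H` is a partial cube. -/
theorem isPartialCube_of_expansion {V W : Type} (G : SimpleGraph V)
    (H : SimpleGraph W) (hG : IsPartialCube G) (G₁ G₂ : G.Subgraph)
    (hexp : IsExpansionWrt H G G₁ G₂) :
    IsPartialCube H := by
  obtain ⟨hconn, d, φ, hinj, hdist⟩ := hG
  obtain ⟨e⟩ := hexp.iso
  have hiso1 := hexp.isometric₁
  have hiso2 := hexp.isometric₂
  have hcov := hexp.covers
  have hE : (expansionGraph G₁ G₂).Connected :=
    expansion_connected hconn hcov hiso1 hiso2 hexp.inter_nonempty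
  constructor
  · exact iso_connected e hE
  · refine ⟨d + 1, fun x => Fin.snoc (φ (eproj (e x))) (eside (e x)), ?_, ?_⟩
    · intro a b hab
      have hside : eside (e a) = eside (e b) := by
        have := congrFun hab (Fin.last d)
        simpa [Fin.snoc_last] using this
      have hproj : eproj (e a) = eproj (e b) := by
        apply hinj
        funext i
        have := congrFun hab i.castSucc
        simpa [Fin.snoc_castSucc] using this
      have heq : e a = e b := by
        rcases ha : e a with x | x <;> rcases hb : e b with y | y <;>
          rw [ha, hb] at hside hproj <;>
          simp only [eside, eproj, Sum.elim_inl, Sum.elim_inr] at hside hproj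
        · exact congrArg Sum.inl (Subtype.ext hproj)
        · exact absurd hside (by simp)
        · exact absurd hside (by simp)
        · exact congrArg Sum.inr (Subtype.ext hproj)
      exact e.toEquiv.injective heq
    · intro x y
      have h1 : (hypercubeGraph (d + 1)).dist
          (Fin.snoc (φ (eproj (e x))) (eside (e x)))
          (Fin.snoc (φ (eproj (e y))) (eside (e y))) =
          G.dist (eproj (e x)) (eproj (e y)) +
            (if eside (e x) = eside (e y) then 0 else 1) := by
        rw [hypercube_dist, hammingDist_snoc, ← hypercube_dist, hdist]
      have h2 : H.dist x y = (expansionGraph G₁ G₂).dist (e x) (e y) :=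
        iso_dist_eq e x y
      rw [h1, h2]
      rcases hx : e x with u | u <;> rcases hy : e y with v | v <;>
        simp only [eproj, eside, Sum.elim_inl, Sum.elim_inr, reduceIte,
          Nat.add_zero, Bool.false_eq_true, Bool.true_eq_false, ite_true,
          ite_false]
      · rw [dist_inl_inl hconn hiso1]
      · rw [dist_inl_inr hconn hcov hiso1 hiso2]
      · rw [dist_inr_inl hconn hcov hiso1 hiso2]
      · rw [dist_inr_inr hconn hiso2]
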